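/- The γ-reweight function is unbiased: for any probability distribution P_T on a finite set Σ, averaging the reweighted distribution P_{T'(E)} over a uniformly random bijection E : Σ → {1,...,|Σ|} recovers P_T; i.e., for every t ∈ Σ, E_E[A_E(E(t)) − A_E(E(t)−1)] = P_T(t). -/

import Mathlib

/-- The auxiliary function `A_E(i) = max(2 ∑_{t : E(t) ≤ i} P_T(t) − 1, 0)` of the
γ-reweight, where the bijection `E : S ≃ Fin n` is viewed as 1-indexed via `(E t : ℕ) + 1`. -/
noncomputable def gammaA {S : Type*} [Fintype S]
    (P : S → ℝ) (E : S ≃ Fin (Fintype.card S)) (i : ℕ) : ℝ :=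
  max (2 * (∑ t', if (E t' : ℕ) + 1 ≤ i then P t' else 0) - 1) 0

/-- The γ-reweight is unbiased: averaging the reweighted distribution
`P_{T'(E)}(t) = A_E(E(t)) − A_E(E(t)−1)` over a uniformly random bijection `E`
recovers the original distribution `P_T`. -/
theorem gamma_reweight_unbiased
    {S : Type*} [Fintype S] [DecidableEq S]
    (P : S → ℝ) (hP : ∀ t, 0 ≤ P t) (hPsum : ∑ t, P t = 1) (t : S) :
    ((Fintype.card (S ≃ Fin (Fintype.card S)) : ℝ))⁻¹ *
      ∑ E : S ≃ Fin (Fintype.card S), (gammaA P E ((E t : ℕ) + 1) - gammaA P E (E t : ℕ))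
      = P t := by
  classical
  set n := Fintype.card S with hn
  have hmax : ∀ x : ℝ, max x 0 - max (-x) 0 = x := by
    intro x
    rcases le_total x 0 with h|h
    · rw [max_eq_right h, max_eq_left (by linarith)]; ring
    · rw [max_eq_left h, max_eq_right (by linarith)]; ring
  set f : (S ≃ Fin n) → ℝ :=
    fun E => gammaA P E ((E t : ℕ) + 1) - gammaA P E (E t : ℕ) with hf
  set r : (S ≃ Fin n) → (S ≃ Fin n) := fun E => E.trans Fin.revPerm with hr
  have hrinv : Function.Involutive r := by
    intro E
    ext s
    simp [hr, Fin.rev_rev]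
  have key : ∀ E : S ≃ Fin n, f E + f (r E) = 2 * P t := by
    intro E
    set u : ℝ := ∑ t', if (E t' : ℕ) + 1 ≤ (E t : ℕ) + 1 then P t' else 0 with hu
    set v : ℝ := ∑ t', if (E t' : ℕ) + 1 ≤ (E t : ℕ) then P t' else 0 with hv
    have huv : u - v = P t := by
      rw [hu, hv, ← Finset.sum_sub_distrib]
      rw [Finset.sum_eq_single t]
      · have : ((E t : ℕ) + 1 ≤ (E t : ℕ) + 1) = True := by simp
        simp
      · intro b _ hb
        rcases le_or_gt ((E b : ℕ) + 1) (E t : ℕ) with h|h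
        · simp [h, h.trans (Nat.le_succ _)]
        · have h2 : ¬ ((E b : ℕ) + 1 ≤ (E t : ℕ) + 1) := by
            intro hle
            have : (E b : ℕ) = (E t : ℕ) := le_antisymm (by omega) (by omega)
            exact hb (E.injective (Fin.val_injective this))
          simp [h2, not_le.mpr h]
      · simp
    have hrt : ∀ s, ((r E) s : ℕ) = n - 1 - (E s : ℕ) := by
      intro s; simp [hr, Fin.rev]; omega
    have h1 : (∑ t', if ((r E) t' : ℕ) + 1 ≤ ((r E) t : ℕ) + 1 then P t' else 0) = 1 - v := by
      rw [← hPsum, eq_sub_iff_add_eq, hv, ← Finset.sum_add_distrib]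
      apply Finset.sum_congr rfl
      intro s _
      have hlt : (E s : ℕ) < n := (E s).isLt
      have hlt' : (E t : ℕ) < n := (E t).isLt
      rcases le_or_gt ((E s : ℕ) + 1) (E t : ℕ) with h|h
      · have : ¬ (((r E) s : ℕ) + 1 ≤ ((r E) t : ℕ) + 1) := by rw [hrt, hrt]; omega
        simp [this, h]
      · have : (((r E) s : ℕ) + 1 ≤ ((r E) t : ℕ) + 1) := by rw [hrt, hrt]; omega
        simp [this, not_le.mpr h]
    have h2 : (∑ t', if ((r E) t' : ℕ) + 1 ≤ ((r E) t : ℕ) then P t' else 0) = 1 - u := by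
      rw [← hPsum, eq_sub_iff_add_eq, hu, ← Finset.sum_add_distrib]
      apply Finset.sum_congr rfl
      intro s _
      have hlt : (E s : ℕ) < n := (E s).isLt
      have hlt' : (E t : ℕ) < n := (E t).isLt
      rcases le_or_gt ((E s : ℕ) + 1) ((E t : ℕ) + 1) with h|h
      · have : ¬ (((r E) s : ℕ) + 1 ≤ ((r E) t : ℕ)) := by rw [hrt, hrt]; omega
        simp [this, h]
      · have : (((r E) s : ℕ) + 1 ≤ ((r E) t : ℕ)) := by rw [hrt, hrt]; omega
        simp [this, not_le.mpr h]
    have expand : f E + f (r E)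
        = (max (2*u-1) 0 - max (-(2*u-1)) 0) - (max (2*v-1) 0 - max (-(2*v-1)) 0) := by
      rw [hf]
      simp only [gammaA]
      rw [h1, h2, ← hu, ← hv]
      ring_nf
    rw [expand, hmax, hmax]
    linarith
  have hsum : ∑ E : S ≃ Fin n, f E = ∑ E : S ≃ Fin n, f (r E) :=
    (Fintype.sum_bijective r hrinv.bijective _ _ (fun E => rfl)).symm
  have htot : 2 * ∑ E : S ≃ Fin n, f E = (Fintype.card (S ≃ Fin n) : ℝ) * (2 * P t) := by
    calc 2 * ∑ E : S ≃ Fin n, f E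
        = (∑ E : S ≃ Fin n, f E) + ∑ E : S ≃ Fin n, f (r E) := by rw [← hsum]; ring
      _ = ∑ E : S ≃ Fin n, (f E + f (r E)) := by rw [Finset.sum_add_distrib]
      _ = ∑ E : S ≃ Fin n, 2 * P t := Finset.sum_congr rfl (fun E _ => key E)
      _ = (Fintype.card (S ≃ Fin n) : ℝ) * (2 * P t) := by
          rw [Finset.sum_const, Finset.card_univ, nsmul_eq_mul]
  have hcard : (Fintype.card (S ≃ Fin n) : ℝ) ≠ 0 := by
    have : Nonempty (S ≃ Fin n) := ⟨Fintype.equivFin S⟩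
    exact_mod_cast Fintype.card_ne_zero
  have : ∑ E : S ≃ Fin n, f E = (Fintype.card (S ≃ Fin n) : ℝ) * P t := by linarith
  rw [this]
  field_simp
  exact mul_div_cancel_left₀ (P t) hcard
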